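/- Let K be a number field. The ring of Witt vectors W_{O_K}(O_K) admits the explicit presentation W_{O_K}(O_K) = { ξ ∈ O_K^{I_K} : ξ_{p·a} ≡ ξ_a (mod p^{1+v_p(a)}) for all p ∈ P_K and all a ∈ I_K }. -/

import Mathlib

open NumberField

noncomputable section

/-- The multiplicative monoid `I_K` of nonzero ideals of the ring of integers of `K`. -/
def IdealMonoid (K : Type) [Field K] [NumberField K] : Submonoid (Ideal (𝓞 K)) where
  carrier := {I | I ≠ ⊥}
  mul_mem' := by
    intro a b ha hb h
    rcases Ideal.mul_eq_bot.mp h with h' | h'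
    · exact ha h'
    · exact hb h'
  one_mem' := by
    simp only [Set.mem_setOf_eq, Ideal.one_eq_top]
    exact top_ne_bot

/-- `I_K`, the monoid of nonzero ideals, as a type. -/
abbrev IK (K : Type) [Field K] [NumberField K] := ↥(IdealMonoid K)

/-- `P_K`, the set of nonzero prime ideals of `𝓞 K`, as a type. -/
def PrimeIdeal (K : Type) [Field K] [NumberField K] :=
  {p : Ideal (𝓞 K) // p.IsPrime ∧ p ≠ ⊥}

/-- A nonzero prime ideal, regarded as an element of `I_K`. -/
def PrimeIdeal.toIK {K : Type} [Field K] [NumberField K] (p : PrimeIdeal K) : IK K :=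
  ⟨p.1, p.2.2⟩

/-- `#k_p`: the cardinality of the residue ring `R ⧸ p`. -/
def residueCard {R : Type} [CommRing R] (p : Ideal R) : ℕ :=
  Nat.card (R ⧸ p)

/-- The shift operator `ψ_a` on `A^{I_K}`: `(ψ_a ξ)_b = ξ_{a·b}`. -/
def shift {K : Type} [Field K] [NumberField K] {A : Type} (a : IK K)
    (ξ : IK K → A) : IK K → A :=
  fun b => ξ (a * b)

/-- For an ideal `p` of `𝓞 K` and a subset `S ⊆ A^{I_K}`, the set `p·S` of all finite
sums of products of elements of `p` with elements of (the module generated by) `S`. -/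
def idealMulSet {K : Type} [Field K] [NumberField K] {A : Type} [CommRing A]
    [Algebra (𝓞 K) A] (p : Ideal (𝓞 K)) (S : Set (IK K → A)) : Set (IK K → A) :=
  ↑(p • Submodule.span (𝓞 K) S)

/-- The descending chain `U_n(A)` of subsets of `A^{I_K}`. -/
def UnSet (K : Type) [Field K] [NumberField K] (A : Type) [CommRing A]
    [Algebra (𝓞 K) A] : ℕ → Set (IK K → A)
  | 0 => Set.univ
  | n + 1 => {ξ | ξ ∈ UnSet K A n ∧ ∀ p : PrimeIdeal K,
      shift p.toIK ξ - ξ ^ residueCard p.1 ∈ idealMulSet p.1 (UnSet K A n)}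

/-- The ring of Witt vectors `W_{O_K}(A) = ⋂ₙ U_n(A)`, as a subset of `A^{I_K}`. -/
def WittSet (K : Type) [Field K] [NumberField K] (A : Type) [CommRing A]
    [Algebra (𝓞 K) A] : Set (IK K → A) :=
  ⋂ n, UnSet K A n

/-- A deterministic finite automaton with output, over input alphabet `Δ` and
output alphabet `O`. -/
structure DFAO (Δ O : Type) : Type 1 where
  State : Type
  [finState : Finite State]
  trans : State → Δ → State
  start : State
  out : State → O

/-- The output of a DFAO on an input word, processing letters from left to right. -/
def DFAO.output {Δ O : Type} (M : DFAO Δ O) (l : List Δ) : O :=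
  M.out (l.foldl M.trans M.start)

/-- `ξ ∈ A^{I_K}` is automatic if some DFAO with input alphabet `P_K` and output
alphabet `A` produces `ξ_a` from every word of primes whose product is `a`. -/
def IsAutomatic {K : Type} [Field K] [NumberField K] {A : Type}
    (ξ : IK K → A) : Prop :=
  ∃ M : DFAO (PrimeIdeal K) A, ∀ (l : List (PrimeIdeal K)) (a : IK K),
    (a : Ideal (𝓞 K)) = (l.map Subtype.val).prod → ξ a = M.output l

/-- `v_p(a)`: the largest `e` such that `p^e` divides `a`. -/
def vIdeal {R : Type} [CommRing R] (p a : Ideal R) : ℕ :=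
  sSup {e : ℕ | p ^ e ∣ a}


section WittAux

set_option synthInstance.maxHeartbeats 1000000
set_option maxHeartbeats 1000000

variable {K : Type} [Field K] [NumberField K]

/-! ### Basic facts about prime ideals -/

lemma PrimeIdeal.prime (p : PrimeIdeal K) : Prime p.1 :=
  Ideal.prime_of_isPrime p.2.2 p.2.1

lemma PrimeIdeal.isMaximal (p : PrimeIdeal K) : p.1.IsMaximal :=
  p.2.1.isMaximal p.2.2

lemma PrimeIdeal.toIK_mul_coe (p : PrimeIdeal K) (a : IK K) :
    ((p.toIK * a : IK K) : Ideal (𝓞 K)) = p.1 * (a : Ideal (𝓞 K)) := rfl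

lemma PrimeIdeal.ext' {p p' : PrimeIdeal K} (h : p.1 = p'.1) : p = p' := Subtype.ext h

/-! ### Facts about `vIdeal` -/

lemma vIdeal_spec {p a : Ideal (𝓞 K)} (hp : p.IsPrime) (hp0 : p ≠ ⊥) (ha : a ≠ ⊥) :
    p ^ vIdeal p a ∣ a ∧ ¬ p ^ (vIdeal p a + 1) ∣ a := by
  have hprime : Prime p := Ideal.prime_of_isPrime hp0 hp
  obtain ⟨N, hN⟩ := FiniteMultiplicity.of_prime_left hprime ha
  have hbdd : BddAbove {e : ℕ | p ^ e ∣ a} := ⟨N, fun e he => by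
    by_contra h
    exact hN ((pow_dvd_pow p (by omega : N + 1 ≤ e)).trans he)⟩
  have hne : {e : ℕ | p ^ e ∣ a}.Nonempty := ⟨0, by simp⟩
  have hmem := Nat.sSup_mem hne hbdd
  refine ⟨hmem, fun hdvd => ?_⟩
  have := le_csSup hbdd (show vIdeal p a + 1 ∈ {e : ℕ | p ^ e ∣ a} from hdvd)
  simp only [vIdeal] at this
  omega

lemma vIdeal_eq_of {p a : Ideal (𝓞 K)} (hp : p.IsPrime) (hp0 : p ≠ ⊥) (ha : a ≠ ⊥) {v : ℕ}
    (h1 : p ^ v ∣ a) (h2 : ¬ p ^ (v + 1) ∣ a) : vIdeal p a = v := by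
  obtain ⟨hd, hnd⟩ := vIdeal_spec hp hp0 ha
  rcases lt_trichotomy (vIdeal p a) v with h | h | h
  · exact absurd ((pow_dvd_pow p (by omega : vIdeal p a + 1 ≤ v)).trans h1) hnd
  · exact h
  · exact absurd ((pow_dvd_pow p (by omega : v + 1 ≤ vIdeal p a)).trans hd) h2

lemma vIdeal_mul_same {p a : Ideal (𝓞 K)} (hp : p.IsPrime) (hp0 : p ≠ ⊥) (ha : a ≠ ⊥) :
    vIdeal p (p * a) = vIdeal p a + 1 := by
  obtain ⟨hd, hnd⟩ := vIdeal_spec hp hp0 ha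
  have hpa : p * a ≠ ⊥ := by
    simp only [ne_eq, Ideal.mul_eq_bot, not_or]; exact ⟨hp0, ha⟩
  refine vIdeal_eq_of hp hp0 hpa ?_ ?_
  · rw [pow_succ']
    exact mul_dvd_mul_left p hd
  · intro hdvd
    rw [pow_succ', pow_succ'] at hdvd
    have h0 : p ≠ (0 : Ideal (𝓞 K)) := hp0
    exact hnd (by rw [pow_succ']; exact (mul_dvd_mul_iff_left h0).mp hdvd)

lemma vIdeal_mul_other {p p' a : Ideal (𝓞 K)} (hp : p.IsPrime) (hp0 : p ≠ ⊥)
    (hp' : p'.IsPrime) (hp'0 : p' ≠ ⊥) (hne : p ≠ p') (ha : a ≠ ⊥) :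
    vIdeal p' (p * a) = vIdeal p' a := by
  obtain ⟨hd, hnd⟩ := vIdeal_spec hp' hp'0 ha
  have hpa : p * a ≠ ⊥ := by
    simp only [ne_eq, Ideal.mul_eq_bot, not_or]; exact ⟨hp0, ha⟩
  refine vIdeal_eq_of hp' hp'0 hpa (hd.mul_left p) ?_
  intro hdvd
  have hnd2 : ¬ p' ∣ p := by
    rw [Ideal.dvd_iff_le]
    intro hle
    exact hne ((hp.isMaximal hp0).eq_of_le hp'.ne_top hle)
  exact hnd ((Ideal.prime_of_isPrime hp'0 hp').pow_dvd_of_dvd_mul_left _ hnd2 hdvd)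

/-! ### Residue field facts -/

lemma fermat (p : PrimeIdeal K) (x : 𝓞 K) : x ^ residueCard p.1 - x ∈ p.1 := by
  haveI := p.isMaximal
  letI : Field (𝓞 K ⧸ p.1) := Ideal.Quotient.field p.1
  letI : Fintype (𝓞 K ⧸ p.1) :=
    @Fintype.ofFinite _ (Ideal.finiteQuotientOfFreeOfNeBot p.1 p.2.2)
  have hq : residueCard p.1 = Fintype.card (𝓞 K ⧸ p.1) :=
    Nat.card_eq_fintype_card (α := 𝓞 K ⧸ p.1)
  rw [← Ideal.Quotient.eq_zero_iff_mem, map_sub, map_pow, sub_eq_zero, hq]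
  exact FiniteField.pow_card (Ideal.Quotient.mk p.1 x)

lemma geom_mem (p : PrimeIdeal K) {x y : 𝓞 K} (h : x - y ∈ p.1) :
    (∑ i ∈ Finset.range (residueCard p.1), x ^ i * y ^ (residueCard p.1 - 1 - i)) ∈ p.1 := by
  haveI := p.isMaximal
  letI : Field (𝓞 K ⧸ p.1) := Ideal.Quotient.field p.1
  letI : Fintype (𝓞 K ⧸ p.1) :=
    @Fintype.ofFinite _ (Ideal.finiteQuotientOfFreeOfNeBot p.1 p.2.2)
  rw [← Ideal.Quotient.eq_zero_iff_mem, map_sum]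
  have hxy : Ideal.Quotient.mk p.1 x = Ideal.Quotient.mk p.1 y :=
    Ideal.Quotient.mk_eq_mk_iff_sub_mem x y |>.mpr h
  calc (∑ i ∈ Finset.range (residueCard p.1),
        Ideal.Quotient.mk p.1 (x ^ i * y ^ (residueCard p.1 - 1 - i)))
      = ∑ i ∈ Finset.range (residueCard p.1),
          (Ideal.Quotient.mk p.1 y) ^ (residueCard p.1 - 1) := by
        refine Finset.sum_congr rfl fun i hi => ?_
        rw [map_mul, map_pow, map_pow, hxy, ← pow_add]
        congr 1
        have := Finset.mem_range.mp hi
        omega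
    _ = 0 := by
        have hq : residueCard p.1 = Fintype.card (𝓞 K ⧸ p.1) :=
          Nat.card_eq_fintype_card (α := 𝓞 K ⧸ p.1)
        rw [Finset.sum_const, Finset.card_range, nsmul_eq_mul, hq,
          Nat.cast_card_eq_zero, zero_mul]

lemma pow_sub_pow_mem (p : PrimeIdeal K) {x y : 𝓞 K} {I : Ideal (𝓞 K)}
    (hxyp : x - y ∈ p.1) (hxyI : x - y ∈ I) :
    x ^ residueCard p.1 - y ^ residueCard p.1 ∈ p.1 * I := by
  rw [← geom_sum₂_mul]
  exact Ideal.mul_mem_mul (geom_mem p hxyp) hxyI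

/-! ### The submodules `CMod` and `EMod` -/

/-- The submodule of `ξ` with `ξ (p a) ≡ ξ a mod p ^ min n (1 + v_p a)` for all `p`, `a`. -/
def CMod (K : Type) [Field K] [NumberField K] (n : ℕ) : Submodule (𝓞 K) (IK K → 𝓞 K) where
  carrier := {ξ | ∀ (p : PrimeIdeal K) (a : IK K),
      ξ (p.toIK * a) - ξ a ∈ p.1 ^ (min n (1 + vIdeal p.1 (a : Ideal (𝓞 K))))}
  add_mem' := by
    intro ξ ζ hξ hζ p a
    have h := add_mem (hξ p a) (hζ p a)
    show (ξ (p.toIK * a) + ζ (p.toIK * a)) - (ξ a + ζ a) ∈ _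
    rw [add_sub_add_comm]
    exact h
  zero_mem' := by
    intro p a
    show (0 : 𝓞 K) - 0 ∈ _
    simp
  smul_mem' := by
    intro r ξ hξ p a
    show r * ξ (p.toIK * a) - r * ξ a ∈ _
    rw [← mul_sub]
    exact Ideal.mul_mem_left _ r (hξ p a)

/-- The submodule describing `p • CMod K n` explicitly. -/
def EMod (K : Type) [Field K] [NumberField K] (n : ℕ) (p : PrimeIdeal K) :
    Submodule (𝓞 K) (IK K → 𝓞 K) where
  carrier := {η | (∀ a : IK K, η a ∈ p.1) ∧ ∀ (p' : PrimeIdeal K) (a : IK K),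
      η (p'.toIK * a) - η a ∈ p.1 * p'.1 ^ (min n (1 + vIdeal p'.1 (a : Ideal (𝓞 K))))}
  add_mem' := by
    intro ξ ζ hξ hζ
    refine ⟨fun a => add_mem (hξ.1 a) (hζ.1 a), fun p' a => ?_⟩
    have h := add_mem (hξ.2 p' a) (hζ.2 p' a)
    show (ξ (p'.toIK * a) + ζ (p'.toIK * a)) - (ξ a + ζ a) ∈ _
    rw [add_sub_add_comm]
    exact h
  zero_mem' := by
    refine ⟨fun a => zero_mem _, fun p' a => ?_⟩
    show (0 : 𝓞 K) - 0 ∈ _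
    simp
  smul_mem' := by
    intro r ξ hξ
    refine ⟨fun a => Ideal.mul_mem_left _ r (hξ.1 a), fun p' a => ?_⟩
    show r * ξ (p'.toIK * a) - r * ξ a ∈ _
    rw [← mul_sub]
    exact Ideal.mul_mem_left _ r (hξ.2 p' a)

lemma smul_CMod_le_EMod (n : ℕ) (p : PrimeIdeal K) :
    p.1 • CMod K n ≤ EMod K n p := by
  rw [Submodule.smul_le]
  intro r hr ξ hξ
  refine ⟨fun a => ?_, fun p' a => ?_⟩
  · show r * ξ a ∈ p.1
    exact Ideal.mul_mem_right _ _ hr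
  · show r * ξ (p'.toIK * a) - r * ξ a ∈ _
    rw [← mul_sub]
    exact Ideal.mul_mem_mul hr (hξ p' a)

open scoped Classical in
/-- Division in `𝓞 K` (when possible). -/
def divBy (t w : 𝓞 K) : 𝓞 K := if h : t ∣ w then h.choose else 0

lemma divBy_spec {t w : 𝓞 K} (h : t ∣ w) : t * divBy t w = w := by
  unfold divBy
  rw [dif_pos h]
  exact h.choose_spec.symm

lemma EMod_le_smul (n : ℕ) (p : PrimeIdeal K) :
    EMod K n p ≤ p.1 • CMod K n := by
  intro η hη
  obtain ⟨hval, hcong⟩ := hη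
  obtain ⟨t, htp, ht0⟩ := Submodule.exists_mem_ne_zero_of_ne_bot p.2.2
  have hle : Ideal.span {t} ≤ p.1 := (Ideal.span_singleton_le_iff_mem p.1).mpr htp
  obtain ⟨c, hc⟩ := Ideal.dvd_iff_le.mpr hle
  have hdvd : ∀ y ∈ c, ∀ a : IK K, t ∣ y * η a := by
    intro y hy a
    rw [← Ideal.mem_span_singleton, hc, mul_comm p.1 c]
    exact Ideal.mul_mem_mul hy (hval a)
  have hzeta : ∀ y ∈ c, (fun a => divBy t (y * η a)) ∈ CMod K n := by
    intro y hy p' a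
    show divBy t (y * η (p'.toIK * a)) - divBy t (y * η a) ∈ _
    have h1 : t * (divBy t (y * η (p'.toIK * a)) - divBy t (y * η a))
        = y * (η (p'.toIK * a) - η a) := by
      rw [mul_sub, divBy_spec (hdvd y hy _), divBy_spec (hdvd y hy a), mul_sub]
    have h2 : y * (η (p'.toIK * a) - η a) ∈
        Ideal.span {t} * (p'.1 ^ (min n (1 + vIdeal p'.1 (a : Ideal (𝓞 K))))) := by
      rw [hc, mul_comm p.1 c, mul_assoc]
      exact Ideal.mul_mem_mul hy (hcong p' a)
    rw [← h1] at h2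
    obtain ⟨w, hw, hwt⟩ := Ideal.mem_span_singleton_mul.mp h2
    rwa [mul_left_cancel₀ ht0 hwt] at hw
  have key : ∀ z ∈ p.1 * c, (∀ a : IK K, t ∣ z * η a) ∧
      (fun a => divBy t (z * η a)) ∈ p.1 • CMod K n := by
    intro z hz
    refine Submodule.mul_induction_on hz ?_ ?_
    · intro x hx y hy
      have hd : ∀ a : IK K, t ∣ x * y * η a := by
        intro a
        rw [mul_assoc]
        exact (hdvd y hy a).mul_left x
      refine ⟨hd, ?_⟩
      have hfun : (fun a => divBy t (x * y * η a)) = x • (fun a => divBy t (y * η a)) := by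
        funext a
        show divBy t (x * y * η a) = x * divBy t (y * η a)
        apply mul_left_cancel₀ ht0
        rw [divBy_spec (hd a), mul_left_comm, divBy_spec (hdvd y hy a), mul_assoc]
      rw [hfun]
      exact Submodule.smul_mem_smul hx (hzeta y hy)
    · rintro z₁ z₂ ⟨hd₁, hm₁⟩ ⟨hd₂, hm₂⟩
      have hd : ∀ a : IK K, t ∣ (z₁ + z₂) * η a := by
        intro a
        rw [add_mul]
        exact dvd_add (hd₁ a) (hd₂ a)
      refine ⟨hd, ?_⟩
      have hfun : (fun a => divBy t ((z₁ + z₂) * η a))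
          = (fun a => divBy t (z₁ * η a)) + (fun a => divBy t (z₂ * η a)) := by
        funext a
        show divBy t ((z₁ + z₂) * η a) = divBy t (z₁ * η a) + divBy t (z₂ * η a)
        apply mul_left_cancel₀ ht0
        rw [divBy_spec (hd a), mul_add, divBy_spec (hd₁ a), divBy_spec (hd₂ a), add_mul]
      rw [hfun]
      exact add_mem hm₁ hm₂
  have htmem : t ∈ p.1 * c := by
    have : t ∈ Ideal.span {t} := Ideal.mem_span_singleton_self t
    rwa [hc] at this
  obtain ⟨hd, hm⟩ := key t htmem
  have hfun : (fun a => divBy t (t * η a)) = η := by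
    funext a
    apply mul_left_cancel₀ ht0
    rw [divBy_spec (hd a)]
  rwa [hfun] at hm

/-! ### The two step lemmas -/

lemma CMod_anti (n : ℕ) : CMod K (n + 1) ≤ CMod K n := by
  intro ξ hξ p a
  exact Ideal.pow_le_pow_right (min_le_min (Nat.le_succ n) le_rfl) (hξ p a)

lemma step_backward {n : ℕ} {ξ : IK K → 𝓞 K} (hξ : ξ ∈ CMod K (n + 1)) (p : PrimeIdeal K) :
    shift p.toIK ξ - ξ ^ residueCard p.1 ∈ EMod K n p := by
  have hone : ∀ (p'' : PrimeIdeal K) (b : IK K), ξ (p''.toIK * b) - ξ b ∈ p''.1 := by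
    intro p'' b
    exact Ideal.pow_le_self (by omega) (hξ p'' b)
  constructor
  · intro a
    show ξ (p.toIK * a) - (ξ a) ^ residueCard p.1 ∈ p.1
    have h2 := fermat p (ξ a)
    have h3 : ξ (p.toIK * a) - (ξ a) ^ residueCard p.1
        = (ξ (p.toIK * a) - ξ a) - ((ξ a) ^ residueCard p.1 - ξ a) := by ring
    rw [h3]
    exact sub_mem (hone p a) h2
  · intro p' a
    show (ξ (p.toIK * (p'.toIK * a)) - ξ (p'.toIK * a) ^ residueCard p.1)
        - (ξ (p.toIK * a) - ξ a ^ residueCard p.1) ∈ _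
    by_cases hpp : p' = p
    · subst hpp
      set v := vIdeal p'.1 (a : Ideal (𝓞 K)) with hv
      set m := min n (1 + v) with hm
      have hgoal : p'.1 * p'.1 ^ m = p'.1 ^ (1 + m) := by
        rw [add_comm 1 m]
        exact (pow_succ' _ _).symm
      rw [hgoal]
      have heq : (ξ (p'.toIK * (p'.toIK * a)) - ξ (p'.toIK * a) ^ residueCard p'.1)
          - (ξ (p'.toIK * a) - ξ a ^ residueCard p'.1)
          = (ξ (p'.toIK * (p'.toIK * a)) - ξ (p'.toIK * a))
            - (ξ (p'.toIK * a) ^ residueCard p'.1 - ξ a ^ residueCard p'.1) := by ring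
      rw [heq]
      refine sub_mem ?_ ?_
      · have h1 := hξ p' (p'.toIK * a)
        have hv2 : vIdeal p'.1 ((p'.toIK * a : IK K) : Ideal (𝓞 K)) = v + 1 := by
          rw [PrimeIdeal.toIK_mul_coe]
          exact vIdeal_mul_same p'.2.1 p'.2.2 a.2
        rw [hv2] at h1
        exact Ideal.pow_le_pow_right (by omega) h1
      · have h1 := hξ p' a
        have h2 := pow_sub_pow_mem p' (Ideal.pow_le_self (by omega) h1) h1
        have h3 : p'.1 * p'.1 ^ (min (n + 1) (1 + v)) ≤ p'.1 ^ (1 + m) := by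
          rw [add_comm 1 m, pow_succ']
          exact Ideal.mul_mono le_rfl (Ideal.pow_le_pow_right (by omega))
        exact h3 h2
    · -- distinct primes
      set w := vIdeal p'.1 (a : Ideal (𝓞 K)) with hw
      set m := min n (1 + w) with hm
      have hnei : p.1 ≠ p'.1 := fun h => hpp (PrimeIdeal.ext' h.symm)
      have hsup : p.1 ⊔ p'.1 ^ m = ⊤ :=
        Ideal.sup_pow_eq_top (p.isMaximal.coprime_of_ne p'.isMaximal hnei)
      rw [Ideal.mul_eq_inf_of_coprime hsup, Submodule.mem_inf]
      set q := residueCard p.1 with hq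
      set X := ξ (p'.toIK * a) with hX
      set Y := ξ a with hY
      set A := ξ (p.toIK * (p'.toIK * a)) with hA
      set C := ξ (p.toIK * a) with hC
      set m' := min (n + 1) (1 + w) with hm'
      have hD1 : A - C ∈ p'.1 ^ m' := by
        have hcomm : p.toIK * (p'.toIK * a) = p'.toIK * (p.toIK * a) := by
          rw [mul_left_comm]
        have h1 := hξ p' (p.toIK * a)
        have hv2 : vIdeal p'.1 ((p.toIK * a : IK K) : Ideal (𝓞 K)) = w := by
          rw [PrimeIdeal.toIK_mul_coe]
          exact vIdeal_mul_other p.2.1 p.2.2 p'.2.1 p'.2.2 hnei a.2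
        rw [hv2] at h1
        rw [hA, hC, hcomm]
        exact h1
      have hD2 : X - Y ∈ p'.1 ^ m' := hξ p' a
      have hm'm : p'.1 ^ m' ≤ p'.1 ^ m := Ideal.pow_le_pow_right (by omega)
      constructor
      · -- membership in p.1
        have e1 : A - X ∈ p.1 := hone p (p'.toIK * a)
        have e2 : C - Y ∈ p.1 := hone p a
        have e3 : X ^ q - X ∈ p.1 := fermat p X
        have e4 : Y ^ q - Y ∈ p.1 := fermat p Y
        have heq : (A - X ^ q) - (C - Y ^ q)
            = (A - X) - (C - Y) - (X ^ q - X) + (Y ^ q - Y) := by ring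
        rw [heq]
        exact add_mem (sub_mem (sub_mem e1 e2) e3) e4
      · -- membership in p'.1 ^ m
        have e1 : A - C ∈ p'.1 ^ m := hm'm hD1
        have e2 : X - Y ∈ p'.1 ^ m := hm'm hD2
        have e3 : X ^ q - Y ^ q ∈ p'.1 ^ m := by
          rw [← geom_sum₂_mul]
          exact Ideal.mul_mem_left _ _ e2
        have heq : (A - X ^ q) - (C - Y ^ q) = (A - C) - (X ^ q - Y ^ q) := by ring
        rw [heq]
        exact sub_mem e1 e3

lemma step_forward {n : ℕ} {ξ : IK K → 𝓞 K} (hξ : ξ ∈ CMod K n)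
    (h : ∀ p : PrimeIdeal K, shift p.toIK ξ - ξ ^ residueCard p.1 ∈ EMod K n p) :
    ξ ∈ CMod K (n + 1) := by
  intro p a
  obtain ⟨hval, hcong⟩ := h p
  set q := residueCard p.1 with hq
  set v := vIdeal p.1 (a : Ideal (𝓞 K)) with hv
  by_cases hle : 1 + v ≤ n
  · have hmin : min (n + 1) (1 + v) = min n (1 + v) := by omega
    rw [hmin]
    exact hξ p a
  · rcases Nat.eq_zero_or_pos n with hn | hn
    · subst hn
      have hmin : min (0 + 1) (1 + v) = 1 := by omega
      rw [hmin, pow_one]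
      have h1 : ξ (p.toIK * a) - (ξ a) ^ q ∈ p.1 := hval a
      have h2 := fermat p (ξ a)
      have h3 : ξ (p.toIK * a) - ξ a = (ξ (p.toIK * a) - (ξ a) ^ q) + ((ξ a) ^ q - ξ a) := by
        ring
      rw [h3]
      exact add_mem h1 h2
    · have hvn : n ≤ v := by omega
      have hmin : min (n + 1) (1 + v) = n + 1 := by omega
      rw [hmin]
      obtain ⟨hdv, -⟩ := vIdeal_spec p.2.1 p.2.2 a.2
      obtain ⟨b0, hb0⟩ : p.1 ∣ (a : Ideal (𝓞 K)) :=
        dvd_trans (dvd_pow_self p.1 (by omega : v ≠ 0)) hdv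
      have hb0ne : b0 ≠ ⊥ := by
        rintro rfl
        rw [Ideal.mul_bot] at hb0
        exact a.2 hb0
      set b : IK K := (⟨b0, hb0ne⟩ : IK K) with hb
      have hab : a = p.toIK * b := Subtype.ext hb0
      have hcoe : (b : Ideal (𝓞 K)) = b0 := rfl
      have h5 : vIdeal p.1 (p.1 * b0) = vIdeal p.1 b0 + 1 := vIdeal_mul_same p.2.1 p.2.2 hb0ne
      rw [← hb0] at h5
      have hvb : vIdeal p.1 (b : Ideal (𝓞 K)) = v - 1 := by
        rw [hcoe]; omega
      have hη := hcong p b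
      rw [hvb] at hη
      have hexp : p.1 * p.1 ^ (min n (1 + (v - 1))) ≤ p.1 ^ (n + 1) := by
        rw [pow_succ']
        exact Ideal.mul_mono le_rfl (Ideal.pow_le_pow_right (by omega))
      have hη' := hexp hη
      have hξb := hξ p b
      rw [hvb] at hξb
      have hminb : min n (1 + (v - 1)) = n := by omega
      rw [hminb] at hξb
      have hpow : ξ (p.toIK * b) ^ q - (ξ b) ^ q ∈ p.1 ^ (n + 1) := by
        have h6 := pow_sub_pow_mem p (Ideal.pow_le_self (by omega) hξb) hξb
        rw [pow_succ']
        exact h6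
      rw [hab]
      have heq : ξ (p.toIK * (p.toIK * b)) - ξ (p.toIK * b)
          = ((ξ (p.toIK * (p.toIK * b)) - ξ (p.toIK * b) ^ q) - (ξ (p.toIK * b) - ξ b ^ q))
            + (ξ (p.toIK * b) ^ q - ξ b ^ q) := by ring
      rw [heq]
      exact add_mem hη' hpow

lemma mem_idealMulSet_iff {n : ℕ} {p : PrimeIdeal K} {η : IK K → 𝓞 K} :
    η ∈ idealMulSet p.1 ((CMod K n : Set (IK K → 𝓞 K))) ↔ η ∈ p.1 • CMod K n := by
  constructor
  · intro h
    have h' : η ∈ p.1 • Submodule.span (𝓞 K) ((CMod K n : Set (IK K → 𝓞 K))) := h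
    refine Submodule.smul_induction_on h' ?_ ?_
    · intro r hr ζ hζ
      have hζ' : ζ ∈ CMod K n :=
        Submodule.span_induction (fun x hx => hx) (zero_mem _)
          (fun x y _ _ hx hy => add_mem hx hy)
          (fun r x _ hx => Submodule.smul_mem _ r hx) hζ
      exact Submodule.smul_mem_smul hr hζ'
    · intro x y hx hy
      exact add_mem hx hy
  · intro h
    refine Submodule.smul_induction_on h ?_ ?_
    · intro r hr ζ hζ
      have hmem : r • ζ ∈ p.1 • Submodule.span (𝓞 K) ((CMod K n : Set (IK K → 𝓞 K))) :=
        Submodule.smul_mem_smul hr (Submodule.subset_span hζ)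
      exact hmem
    · intro x y hx hy
      have hx' : x ∈ p.1 • Submodule.span (𝓞 K) ((CMod K n : Set (IK K → 𝓞 K))) := hx
      have hy' : y ∈ p.1 • Submodule.span (𝓞 K) ((CMod K n : Set (IK K → 𝓞 K))) := hy
      have hsum := add_mem hx' hy'
      exact hsum

lemma unSet_eq (n : ℕ) : UnSet K (𝓞 K) n = (CMod K n : Set (IK K → 𝓞 K)) := by
  induction n with
  | zero =>
    ext ξ
    constructor
    · intro _ p a
      rw [Nat.zero_min, pow_zero, Ideal.one_eq_top]
      exact Submodule.mem_top
    · intro _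
      exact Set.mem_univ ξ
  | succ n ih =>
    ext ξ
    show (ξ ∈ UnSet K (𝓞 K) n ∧ ∀ p : PrimeIdeal K,
        shift p.toIK ξ - ξ ^ residueCard p.1 ∈ idealMulSet p.1 (UnSet K (𝓞 K) n)) ↔ _
    rw [ih]
    constructor
    · rintro ⟨h1, h2⟩
      have h1' : ξ ∈ CMod K n := h1
      refine step_forward h1' (fun p => ?_)
      exact smul_CMod_le_EMod n p (mem_idealMulSet_iff.mp (h2 p))
    · intro hξmem
      have hξ' : ξ ∈ CMod K (n + 1) := hξmem
      exact ⟨CMod_anti n hξ', fun p =>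
        mem_idealMulSet_iff.mpr (EMod_le_smul n p (step_backward hξ' p))⟩

end WittAux

/-- explicit presentation of `W_{O_K}(O_K)`: it consists exactly of those
`ξ ∈ O_K^{I_K}` with `ξ_{p·a} ≡ ξ_a (mod p^{1+v_p(a)})` for all `p ∈ P_K`, `a ∈ I_K`. -/
theorem witt_ok_presentation (K : Type) [Field K] [NumberField K] :
    WittSet K (𝓞 K) =
      {ξ : IK K → 𝓞 K | ∀ (p : PrimeIdeal K) (a : IK K),
        ξ (p.toIK * a) - ξ a ∈ p.1 ^ (1 + vIdeal p.1 (a : Ideal (𝓞 K)))} := by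
  ext ξ
  simp only [WittSet, Set.mem_iInter, Set.mem_setOf_eq]
  constructor
  · intro h p a
    have h1 : ξ ∈ (CMod K (1 + vIdeal p.1 (a : Ideal (𝓞 K))) : Set (IK K → 𝓞 K)) := by
      rw [← unSet_eq]
      exact h _
    have h2 := h1 p a
    rwa [min_self] at h2
  · intro h n
    rw [unSet_eq]
    intro p a
    exact Ideal.pow_le_pow_right (min_le_right _ _) (h p a)

end
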